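/- Let G be a finite undirected connected graph with adjacency matrix A, degrees d_i, and no dangling edges. Let P̂ be the non-backtracking transition matrix on directed edges. Then the pullback L P̂ R (with λ_e = 1/d_{ter(e)}, since the stationary distribution of P̂ is uniform) equals the transition matrix of the standard uniform random walk on G: (L P̂ R)_{ij} = A_{ij}/d_i. -/

import Mathlib

open scoped Classical

/-- The pullback of the non-backtracking random walk on a finite undirected connected
graph (without dangling edges) is the standard uniform random walk:
`(L P̂ R)_{ij} = A_{ij}/d_i`. -/
theorem pullback_nonbacktracking_eq_uniformRW {V : Type*} [Fintype V] [DecidableEq V]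
    (G : SimpleGraph V) [DecidableRel G.Adj] (hconn : G.Connected)
    (hdeg : ∀ v, 2 ≤ G.degree v)
    (hnd : ∀ i j : V, G.Adj i j → ∃ k, G.Adj j k ∧ k ≠ i)
    (Phat : Matrix {e : V × V // G.Adj e.1 e.2} {e : V × V // G.Adj e.1 e.2} ℝ)
    (hPhat : ∀ e f, Phat e f =
      if e.val.2 = f.val.1 ∧ f.val.2 ≠ e.val.1 then
        ((G.degree e.val.2 : ℝ) - (if G.Adj e.val.2 e.val.1 then 1 else 0))⁻¹
      else 0)
    -- the stationary distribution of `P̂` is uniform, so `λ_e = 1/d_{ter(e)}`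
    (lam : {e : V × V // G.Adj e.1 e.2} → ℝ)
    (hlam : ∀ e, lam e = (G.degree e.val.2 : ℝ)⁻¹)
    (L : Matrix V {e : V × V // G.Adj e.1 e.2} ℝ)
    (hL : ∀ i e, L i e = if e.val.2 = i then lam e else 0)
    (R : Matrix {e : V × V // G.Adj e.1 e.2} V ℝ)
    (hR : ∀ e i, R e i = if e.val.2 = i then 1 else 0) :
    ∀ i j, (L * Phat * R) i j = (if G.Adj i j then (1 : ℝ) else 0) / G.degree i := by
  intro i j
  by_cases hij : G.Adj i j
  · rw [Matrix.mul_apply]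
    have hf0 : (⟨(i, j), hij⟩ : {e : V × V // G.Adj e.1 e.2}) ∈ Finset.univ :=
      Finset.mem_univ _
    rw [Finset.sum_eq_single (⟨(i, j), hij⟩ : {e : V × V // G.Adj e.1 e.2})]
    · have hR1 : R ⟨(i, j), hij⟩ j = 1 := by rw [hR]; simp
      rw [hR1, mul_one, Matrix.mul_apply]
      have key : ∀ e : {e : V × V // G.Adj e.1 e.2},
          L i e * Phat e ⟨(i, j), hij⟩ =
          if e.val.2 = i ∧ e.val.1 ≠ j then
            (G.degree i : ℝ)⁻¹ * ((G.degree i : ℝ) - 1)⁻¹ else 0 := by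
        intro e
        rw [hL, hPhat, hlam]
        by_cases h1 : e.val.2 = i
        · by_cases h2 : e.val.1 ≠ j
          · have hadj : G.Adj e.val.2 e.val.1 := G.adj_symm e.prop
            simp [h1, h2, Ne.symm h2, h1 ▸ hadj]
            rw [h1]
          · push_neg at h2
            simp [h1, h2]
        · simp [h1]
      rw [Finset.sum_congr rfl (fun e _ => key e), Finset.sum_ite,
        Finset.sum_const_zero, add_zero, Finset.sum_const]
      have hcard : (Finset.univ.filter
          (fun e : {e : V × V // G.Adj e.1 e.2} => e.val.2 = i ∧ e.val.1 ≠ j)).card =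
          ((G.neighborFinset i).erase j).card := by
        apply Finset.card_bij (fun e _ => e.val.1)
        · intro e he
          simp only [Finset.mem_filter, Finset.mem_univ, true_and] at he
          rw [Finset.mem_erase, SimpleGraph.mem_neighborFinset]
          exact ⟨he.2, (he.1 ▸ e.prop.symm : G.Adj i e.val.1)⟩
        · intro e he f hf h
          simp only [Finset.mem_filter, Finset.mem_univ, true_and] at he hf
          apply Subtype.ext
          exact Prod.ext h (he.1.trans hf.1.symm)
        · intro k hk
          rw [Finset.mem_erase, SimpleGraph.mem_neighborFinset] at hk
          exact ⟨⟨(k, i), hk.2.symm⟩, by simp [hk.1], rfl⟩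
      rw [hcard, Finset.card_erase_of_mem (by rwa [SimpleGraph.mem_neighborFinset]),
        SimpleGraph.card_neighborFinset_eq_degree]
      have hd2 : 2 ≤ G.degree i := hdeg i
      have hd1 : (1 : ℝ) ≤ (G.degree i : ℝ) - 1 := by
        have : (2 : ℝ) ≤ (G.degree i : ℝ) := by exact_mod_cast hd2
        linarith
      have hdn0 : (G.degree i : ℝ) ≠ 0 := by positivity
      have hdn1 : (G.degree i : ℝ) - 1 ≠ 0 := by linarith
      have hcast : ((G.degree i - 1 : ℕ) : ℝ) = (G.degree i : ℝ) - 1 := by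
        have : 1 ≤ G.degree i := by omega
        push_cast [this]
        ring
      rw [if_pos hij, nsmul_eq_mul, hcast]
      field_simp
    · intro f _ hfne
      rw [hR]
      by_cases hfj : f.val.2 = j
      · rw [if_pos hfj]
        have hf1 : f.val.1 ≠ i := by
          intro h
          exact hfne (Subtype.ext (Prod.ext h hfj))
        rw [Matrix.mul_apply]
        have : ∀ e, L i e * Phat e f = 0 := by
          intro e
          rw [hL, hPhat]
          by_cases h1 : e.val.2 = i
          · rw [if_pos h1, if_neg, mul_zero]
            rintro ⟨h, -⟩
            exact hf1 (h1 ▸ h).symm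
          · rw [if_neg h1, zero_mul]
        rw [Finset.sum_congr rfl (fun e _ => this e)]
        simp
      · rw [if_neg hfj, mul_zero]
    · intro h
      exact absurd hf0 h
  · rw [if_neg hij, zero_div, Matrix.mul_apply]
    apply Finset.sum_eq_zero
    intro f _
    rw [hR]
    by_cases hfj : f.val.2 = j
    · rw [if_pos hfj, Matrix.mul_apply]
      have : ∀ e, L i e * Phat e f = 0 := by
        intro e
        rw [hL, hPhat]
        by_cases h1 : e.val.2 = i
        · rw [if_pos h1, if_neg, mul_zero]
          rintro ⟨h, -⟩
          exact hij (h1 ▸ h ▸ hfj ▸ f.prop)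
        · rw [if_neg h1, zero_mul]
      rw [Finset.sum_congr rfl (fun e _ => this e)]
      simp
    · rw [if_neg hfj, mul_zero]
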